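/- Let A be a 2×2 real matrix with σ₁ = tr A and σ₂ = det A, and suppose σ₁ ≠ 0 and σ₂ ≠ 0. Then the linear endomorphism Λ_A of the space of symmetric 2×2 real matrices is bijective and its inverse is given by Λ_A⁻¹ = ( 2·Λ_A² − 3σ₁·Λ_A + (σ₁² + 2σ₂)·Id ) / (σ₁ σ₂). -/
import Mathlib


open Matrix Polynomial

/-- The submodule of symmetric `n × n` matrices. -/
def symMat (n : ℕ) (𝕜 : Type*) [CommRing 𝕜] : Submodule 𝕜 (Matrix (Fin n) (Fin n) 𝕜) where
  carrier := {W | Wᵀ = W}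
  add_mem' := by
    intro a b ha hb
    simp only [Set.mem_setOf_eq, Matrix.transpose_add] at *
    rw [ha, hb]
  zero_mem' := by simp
  smul_mem' := by
    intro c a ha
    simp only [Set.mem_setOf_eq, Matrix.transpose_smul] at *
    rw [ha]

/-- The operator `Λ_A` on symmetric matrices, `Λ_A W = (Aᵀ W + W A)/2`. -/
def Lam {n : ℕ} {𝕜 : Type*} [Field 𝕜] (A : Matrix (Fin n) (Fin n) 𝕜) :
    symMat n 𝕜 →ₗ[𝕜] symMat n 𝕜 :=
  LinearMap.restrict
    ((2 : 𝕜)⁻¹ • (LinearMap.mulLeft 𝕜 Aᵀ + LinearMap.mulRight 𝕜 A))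
    (fun W hW => by
      have h : Wᵀ = W := hW
      show ((2 : 𝕜)⁻¹ • (Aᵀ * W + W * A))ᵀ = (2 : 𝕜)⁻¹ • (Aᵀ * W + W * A)
      simp [Matrix.transpose_add, Matrix.transpose_mul, h, add_comm])


lemma Lam_coe (A : Matrix (Fin 2) (Fin 2) ℝ) (x : symMat 2 ℝ) :
    ((Lam A x : symMat 2 ℝ) : Matrix (Fin 2) (Fin 2) ℝ)
      = (2 : ℝ)⁻¹ • (Aᵀ * (x : Matrix (Fin 2) (Fin 2) ℝ) + (x : Matrix (Fin 2) (Fin 2) ℝ) * A) := rfl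

set_option maxHeartbeats 1600000 in
/-- For a `2 × 2` real matrix `A` with `σ₁ = tr A ≠ 0` and `σ₂ = det A ≠ 0`,
the operator `Λ_A` is bijective, with inverse
`Λ_A⁻¹ = (2Λ_A² − 3σ₁Λ_A + (σ₁² + 2σ₂)·Id)/(σ₁σ₂)`. -/
theorem lam_inverse_two (A : Matrix (Fin 2) (Fin 2) ℝ)
    (h1 : A.trace ≠ 0) (h2 : A.det ≠ 0) :
    Function.Bijective (Lam A) ∧
      ((A.trace * A.det)⁻¹ •
          ((2 : ℝ) • ((Lam A : Module.End ℝ (symMat 2 ℝ)) * Lam A)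
            - (3 * A.trace) • (Lam A : Module.End ℝ (symMat 2 ℝ))
            + (A.trace ^ 2 + 2 * A.det) • (1 : Module.End ℝ (symMat 2 ℝ)))) * Lam A = 1 ∧
      (Lam A : Module.End ℝ (symMat 2 ℝ)) *
        ((A.trace * A.det)⁻¹ •
          ((2 : ℝ) • ((Lam A : Module.End ℝ (symMat 2 ℝ)) * Lam A)
            - (3 * A.trace) • (Lam A : Module.End ℝ (symMat 2 ℝ))
            + (A.trace ^ 2 + 2 * A.det) • (1 : Module.End ℝ (symMat 2 ℝ)))) = 1 := by
  set c : ℝ := A.trace * A.det with hc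
  have hc0 : c ≠ 0 := mul_ne_zero h1 h2
  set P : Module.End ℝ (symMat 2 ℝ) :=
    (2 : ℝ) • ((Lam A : Module.End ℝ (symMat 2 ℝ)) * Lam A)
      - (3 * A.trace) • (Lam A : Module.End ℝ (symMat 2 ℝ))
      + (A.trace ^ 2 + 2 * A.det) • (1 : Module.End ℝ (symMat 2 ℝ)) with hP
  have key : P * (Lam A : Module.End ℝ (symMat 2 ℝ)) = c • 1 := by
    apply LinearMap.ext
    rintro ⟨W, hW⟩
    have hs : W 1 0 = W 0 1 := by
      have := congrFun (congrFun (hW : Wᵀ = W) 1) 0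
      simpa [Matrix.transpose_apply] using this.symm
    apply Subtype.ext
    show (((P * (Lam A : Module.End ℝ (symMat 2 ℝ))) ⟨W, hW⟩ : symMat 2 ℝ) : Matrix (Fin 2) (Fin 2) ℝ)
        = (((c • (1 : Module.End ℝ (symMat 2 ℝ))) ⟨W, hW⟩ : symMat 2 ℝ) : Matrix (Fin 2) (Fin 2) ℝ)
    simp only [hP, Module.End.mul_apply, LinearMap.add_apply, LinearMap.sub_apply,
      LinearMap.smul_apply, Module.End.one_apply, Submodule.coe_add,
      AddSubgroupClass.coe_sub, SetLike.val_smul, Lam_coe]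
    ext i j
    fin_cases i <;> fin_cases j <;>
      simp only [Matrix.add_apply, Matrix.sub_apply, Matrix.smul_apply, Matrix.mul_apply,
        Fin.sum_univ_two, Matrix.transpose_apply, Matrix.trace_fin_two, Matrix.det_fin_two,
        Fin.mk_zero, Fin.mk_one, smul_eq_mul, hc, hs, Fin.isValue] <;> ring
  have key' : (Lam A : Module.End ℝ (symMat 2 ℝ)) * P = c • 1 := by
    apply LinearMap.ext
    rintro ⟨W, hW⟩
    have hs : W 1 0 = W 0 1 := by
      have := congrFun (congrFun (hW : Wᵀ = W) 1) 0
      simpa [Matrix.transpose_apply] using this.symm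
    apply Subtype.ext
    show ((((Lam A : Module.End ℝ (symMat 2 ℝ)) * P) ⟨W, hW⟩ : symMat 2 ℝ) : Matrix (Fin 2) (Fin 2) ℝ)
        = (((c • (1 : Module.End ℝ (symMat 2 ℝ))) ⟨W, hW⟩ : symMat 2 ℝ) : Matrix (Fin 2) (Fin 2) ℝ)
    simp only [hP, Module.End.mul_apply, LinearMap.add_apply, LinearMap.sub_apply,
      LinearMap.smul_apply, Module.End.one_apply, Submodule.coe_add,
      AddSubgroupClass.coe_sub, SetLike.val_smul, map_add, map_sub, _root_.map_smul, Lam_coe]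
    ext i j
    fin_cases i <;> fin_cases j <;>
      simp only [Matrix.add_apply, Matrix.sub_apply, Matrix.smul_apply, Matrix.mul_apply,
        Fin.sum_univ_two, Matrix.transpose_apply, Matrix.trace_fin_two, Matrix.det_fin_two,
        Fin.mk_zero, Fin.mk_one, smul_eq_mul, hc, hs, Fin.isValue] <;> ring
  have hL : (c⁻¹ • P) * (Lam A : Module.End ℝ (symMat 2 ℝ)) = 1 := by
    rw [smul_mul_assoc, key, smul_smul, inv_mul_cancel₀ hc0, one_smul]
  have hR : (Lam A : Module.End ℝ (symMat 2 ℝ)) * (c⁻¹ • P) = 1 := by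
    rw [mul_smul_comm, key', smul_smul, inv_mul_cancel₀ hc0, one_smul]
  refine ⟨?_, hL, hR⟩
  refine Function.bijective_iff_has_inverse.mpr ⟨(c⁻¹ • P), fun x => ?_, fun x => ?_⟩
  · have := DFunLike.congr_fun hL x
    simpa [Module.End.mul_apply] using this
  · have := DFunLike.congr_fun hR x
    simpa [Module.End.mul_apply] using this
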